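/- Let s ≥ 1 be an integer, and for (i0, i1) ∈ ℤ² let T(i0, i1) = {(i, j) ∈ ℤ² : s·i0 ≤ i + j < s·(1 + i0) and s·i1 ≤ j − i < s·(1 + i1)} be the tile for the diagonal tiling hyperplanes i+j and j−i. Then the footprint of T(i0, i1) under the dependence B(i, j) = i is exactly {i ∈ ℤ : s·(i0 − i1 − 1) < 2·i < s·(i0 − i1 + 1)}. -/
import Mathlib


/-- for tile size `s ≥ 1` and diagonal tiling hyperplanes `i+j`, `j−i`,
the footprint of tile `T(i0, i1)` under the dependence `B(i,j) = i` is exactly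
`{i : s(i0 − i1 − 1) < 2i < s(i0 − i1 + 1)}`. -/
theorem single_dep_footprint
    (s : ℤ) (hs : 1 ≤ s) (i0 i1 : ℤ) :
    {i : ℤ | ∃ j : ℤ,
        (s * i0 ≤ i + j ∧ i + j < s * (1 + i0)) ∧
        (s * i1 ≤ j - i ∧ j - i < s * (1 + i1))} =
      {i : ℤ | s * (i0 - i1 - 1) < 2 * i ∧ 2 * i < s * (i0 - i1 + 1)} := by
  ext i
  simp only [Set.mem_setOf_eq]
  constructor
  · rintro ⟨j, ⟨h1, h2⟩, h3, h4⟩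
    constructor <;> nlinarith
  · rintro ⟨h1, h2⟩
    refine ⟨max (s * i0 - i) (s * i1 + i), ⟨?_, ?_⟩, ?_, ?_⟩
    · have := le_max_left (s * i0 - i) (s * i1 + i); linarith
    · have : max (s * i0 - i) (s * i1 + i) < s * (1 + i0) - i :=
        max_lt (by nlinarith) (by nlinarith)
      linarith
    · have := le_max_right (s * i0 - i) (s * i1 + i); linarith
    · have : max (s * i0 - i) (s * i1 + i) < s * (1 + i1) + i :=
        max_lt (by nlinarith) (by nlinarith)
      linarith
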